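/- Let α > 0 with α ∉ ℕ, and define R₁(r) = r^{2+2α}(1+r^{2+2α})^{−2} and R₂(r) = r^{2α}(1+r^{2+2α})^{−2}·(4(1+α)² g_α(r)² + g_α(r)·r), where g_α(r) = −r/(4α(1+α)(1+r^{2+2α})). Then for each i ∈ {1,2} there exist a constant C_i > 0 and a twice continuously differentiable function w_i : (0,∞) → ℝ such that w_i''(r) + w_i'(r)/r + (8(1+α)² r^{2α}(1+r^{2+2α})^{−2} − 4/r²) w_i(r) = R_i(r) for all r > 0 and |w_i(r)| ≤ C_i for all r > 0. -/

import Mathlib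

/-- `g_α(r) = -r/(4α(1+α)(1+r^{2+2α}))`. -/
noncomputable def gfun (α r : ℝ) : ℝ :=
  -r / (4 * α * (1 + α) * (1 + r ^ (2 + 2 * α)))


section aux
variable (α : ℝ)

lemma hasDerivAt_u (hα : 0 < α) {x : ℝ} (hx : x ≠ 0) :
    HasDerivAt (fun y : ℝ => 1 + y ^ (2 + 2*α)) ((2 + 2*α) * x ^ (2 + 2*α - 1)) x :=
  (Real.hasDerivAt_rpow_const (Or.inl hx)).const_add 1

lemma split1 {r : ℝ} (hr : 0 < r) : r ^ (2 + 2*α) = r ^ (2*α) * (r * r) := by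
  rw [show (2 + 2*α) = 2*α + 2 by ring, Real.rpow_add hr,
    show (2:ℝ) = ((2:ℕ):ℝ) by norm_num, Real.rpow_natCast]
  ring

lemma split2 {r : ℝ} (hr : 0 < r) : r ^ (2 + 2*α - 1) = r ^ (2*α) * r := by
  rw [show (2 + 2*α - 1) = 2*α + 1 by ring, Real.rpow_add hr, Real.rpow_one]

lemma split3 {r : ℝ} (hr : 0 < r) : r ^ (2 + 2*α - 1 - 1) = r ^ (2*α) := by
  rw [show (2 + 2*α - 1 - 1) = 2*α by ring]

lemma mySqLe {r : ℝ} (hr : 0 < r) (hα : 0 < α) : r ^ 2 ≤ 1 + r ^ (2 + 2*α) := by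
  rcases le_total r 1 with h | h
  · nlinarith [Real.rpow_pos_of_pos hr (2 + 2*α)]
  · have h1 : r ^ ((2:ℕ):ℝ) ≤ r ^ (2 + 2*α) :=
      Real.rpow_le_rpow_of_exponent_le h (by push_cast; linarith)
    rw [Real.rpow_natCast] at h1
    linarith

end aux

lemma part1 (α : ℝ) (hα : 0 < α) (h1 : α ≠ 1) :
    ∃ C₁ : ℝ, 0 < C₁ ∧
      ∃ w₁ : ℝ → ℝ, ContDiffOn ℝ 2 w₁ (Set.Ioi 0) ∧
        (∀ r : ℝ, 0 < r →
          deriv (deriv w₁) r + deriv w₁ r / r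
            + (8 * (1 + α) ^ 2 * r ^ (2 * α) / (1 + r ^ (2 + 2 * α)) ^ 2 - 4 / r ^ 2)
              * w₁ r
          = r ^ (2 + 2 * α) / (1 + r ^ (2 + 2 * α)) ^ 2) ∧
        (∀ r : ℝ, 0 < r → |w₁ r| ≤ C₁) := by
  set c : ℝ := 1 / (4 * (1 + α) * (α - 1)) with hcdef
  have hc0 : c ≠ 0 := by
    have h4 : (4 * (1 + α) : ℝ) ≠ 0 := by positivity
    have h5 : (α - 1 : ℝ) ≠ 0 := sub_ne_zero.mpr h1
    have h6 : (1 + α : ℝ) ≠ 0 := by positivity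
    simp [hcdef, h4, h5, h6]
  set w : ℝ → ℝ := fun x => c * x ^ 2 / (1 + x ^ (2 + 2*α)) with hwdef
  have hW : ∀ x : ℝ, 0 < x → HasDerivAt w
      ((c * (2*x) * (1 + x ^ (2 + 2*α)) - c * x ^ 2 * ((2 + 2*α) * x ^ (2 + 2*α - 1)))
        / (1 + x ^ (2 + 2*α)) ^ 2) x := by
    intro x hx
    have hD : (1 + x ^ (2 + 2*α)) ≠ 0 := by positivity
    have hnum : HasDerivAt (fun y : ℝ => c * y ^ 2) (c * (2*x)) x := by
      simpa [mul_assoc] using (hasDerivAt_pow 2 x).const_mul c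
    exact hnum.div (hasDerivAt_u α hα hx.ne') hD
  set W' : ℝ → ℝ := fun x =>
      (c * (2*x) * (1 + x ^ (2 + 2*α)) - c * x ^ 2 * ((2 + 2*α) * x ^ (2 + 2*α - 1)))
        / (1 + x ^ (2 + 2*α)) ^ 2 with hW'def
  refine ⟨|c|, abs_pos.mpr hc0, w, ?_, ?_, ?_⟩
  · intro x hx
    have hx0 : (0:ℝ) < x := hx
    have hD : (1 + x ^ (2 + 2*α)) ≠ 0 := by positivity
    have hc1 : ContDiffAt ℝ 2 (fun y : ℝ => c * y ^ 2) x :=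
      (contDiff_const.mul (contDiff_id.pow 2)).contDiffAt
    have hc2 : ContDiffAt ℝ 2 (fun y : ℝ => 1 + y ^ (2 + 2*α)) x :=
      contDiffAt_const.add (Real.contDiffAt_rpow_const_of_ne hx0.ne')
    exact (hc1.div hc2 hD).contDiffWithinAt
  · intro r hr
    have hrne : r ≠ 0 := hr.ne'
    have hd1 : deriv w r = W' r := (hW r hr).deriv
    have hd2 : deriv (deriv w) r = deriv W' r := by
      apply Filter.EventuallyEq.deriv_eq
      filter_upwards [Ioi_mem_nhds hr] with x hx using (hW x hx).deriv
    -- second derivative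
    have hDpos : (0:ℝ) < 1 + r ^ (2 + 2*α) := by positivity
    have ha : HasDerivAt (fun x : ℝ => c * (2*x)) (c * 2) r := by
      simpa using ((hasDerivAt_id r).const_mul (2:ℝ)).const_mul c
    have hb : HasDerivAt (fun y : ℝ => c * y ^ 2) (c * (2*r)) r := by
      simpa [mul_assoc] using (hasDerivAt_pow 2 r).const_mul c
    have hc2 : HasDerivAt (fun x : ℝ => (2 + 2*α) * x ^ (2 + 2*α - 1))
        ((2 + 2*α) * ((2 + 2*α - 1) * r ^ (2 + 2*α - 1 - 1))) r :=
      (Real.hasDerivAt_rpow_const (Or.inl hrne)).const_mul (2 + 2*α)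
    have hnum : HasDerivAt (fun x : ℝ =>
        c * (2*x) * (1 + x ^ (2 + 2*α)) - c * x ^ 2 * ((2 + 2*α) * x ^ (2 + 2*α - 1)))
        ((c * 2 * (1 + r ^ (2 + 2*α)) + c * (2*r) * ((2 + 2*α) * r ^ (2 + 2*α - 1)))
          - (c * (2*r) * ((2 + 2*α) * r ^ (2 + 2*α - 1))
            + c * r ^ 2 * ((2 + 2*α) * ((2 + 2*α - 1) * r ^ (2 + 2*α - 1 - 1))))) r :=
      (ha.mul (hasDerivAt_u α hα hrne)).sub (hb.mul hc2)
    have hden : HasDerivAt (fun x : ℝ => (1 + x ^ (2 + 2*α)) ^ 2)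
        ((2:ℕ) * (1 + r ^ (2 + 2*α)) ^ (2-1) * ((2 + 2*α) * r ^ (2 + 2*α - 1))) r :=
      (hasDerivAt_u α hα hrne).pow 2
    have hW'd := (hnum.div hden (by positivity)).deriv
    simp only [Pi.div_def] at hW'd
    rw [hd2, hW'd, hd1]
    simp only [hwdef, hW'def]
    rw [split1 α hr, split2 α hr, split3 α hr, hcdef]
    have hA : (0:ℝ) < r ^ (2*α) := Real.rpow_pos_of_pos hr _
    have hDne : (1 + r ^ (2*α) * (r * r)) ≠ 0 := by positivity
    have h4 : (1 + α : ℝ) ≠ 0 := by positivity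
    have h5 : (α - 1 : ℝ) ≠ 0 := sub_ne_zero.mpr h1
    field_simp
    ring
  · intro r hr
    have hDpos : (0:ℝ) < 1 + r ^ (2 + 2*α) := by positivity
    have hle : r ^ 2 / (1 + r ^ (2 + 2*α)) ≤ 1 := (div_le_one hDpos).mpr (mySqLe α hr hα)
    have h0 : (0:ℝ) ≤ r ^ 2 / (1 + r ^ (2 + 2*α)) := by positivity
    have : |w r| = |c| * (r ^ 2 / (1 + r ^ (2 + 2*α))) := by
      simp only [hwdef]
      rw [mul_div_assoc, abs_mul, abs_of_nonneg h0]
    rw [this]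
    nlinarith [abs_nonneg c]

lemma part2 (α : ℝ) (hα : 0 < α) :
    ∃ C₂ : ℝ, 0 < C₂ ∧
      ∃ w₂ : ℝ → ℝ, ContDiffOn ℝ 2 w₂ (Set.Ioi 0) ∧
        (∀ r : ℝ, 0 < r →
          deriv (deriv w₂) r + deriv w₂ r / r
            + (8 * (1 + α) ^ 2 * r ^ (2 * α) / (1 + r ^ (2 + 2 * α)) ^ 2 - 4 / r ^ 2)
              * w₂ r
          = r ^ (2 * α) / (1 + r ^ (2 + 2 * α)) ^ 2
              * (4 * (1 + α) ^ 2 * gfun α r ^ 2 + gfun α r * r)) ∧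
        (∀ r : ℝ, 0 < r → |w₂ r| ≤ C₂) := by
  set c : ℝ := -1 / (64 * α ^ 2 * (1 + α) ^ 2) with hcdef
  have hc0 : c ≠ 0 := by
    have h4 : (64 * α ^ 2 * (1 + α) ^ 2 : ℝ) > 0 := by positivity
    rw [hcdef]
    exact div_ne_zero (by norm_num) h4.ne'
  set w : ℝ → ℝ := fun x => c * x ^ 2 / (1 + x ^ (2 + 2*α)) ^ 2 with hwdef
  have hW : ∀ x : ℝ, 0 < x → HasDerivAt w
      ((c * (2*x) * (1 + x ^ (2 + 2*α)) ^ 2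
        - c * x ^ 2 * ((2:ℕ) * (1 + x ^ (2 + 2*α)) ^ (2-1) * ((2 + 2*α) * x ^ (2 + 2*α - 1))))
        / ((1 + x ^ (2 + 2*α)) ^ 2) ^ 2) x := by
    intro x hx
    have hD : ((1 + x ^ (2 + 2*α)) ^ 2) ≠ 0 := by positivity
    have hnum : HasDerivAt (fun y : ℝ => c * y ^ 2) (c * (2*x)) x := by
      simpa [mul_assoc] using (hasDerivAt_pow 2 x).const_mul c
    exact hnum.div ((hasDerivAt_u α hα hx.ne').pow 2) hD
  refine ⟨|c|, abs_pos.mpr hc0, w, ?_, ?_, ?_⟩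
  · intro x hx
    have hx0 : (0:ℝ) < x := hx
    have hD : ((1 + x ^ (2 + 2*α)) ^ 2) ≠ 0 := by positivity
    have hc1 : ContDiffAt ℝ 2 (fun y : ℝ => c * y ^ 2) x :=
      (contDiff_const.mul (contDiff_id.pow 2)).contDiffAt
    have hc2 : ContDiffAt ℝ 2 (fun y : ℝ => (1 + y ^ (2 + 2*α)) ^ 2) x :=
      (contDiffAt_const.add (Real.contDiffAt_rpow_const_of_ne hx0.ne')).pow 2
    exact (hc1.div hc2 hD).contDiffWithinAt
  · intro r hr
    have hrne : r ≠ 0 := hr.ne'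
    have hd1 : deriv w r = (c * (2*r) * (1 + r ^ (2 + 2*α)) ^ 2
        - c * r ^ 2 * ((2:ℕ) * (1 + r ^ (2 + 2*α)) ^ (2-1) * ((2 + 2*α) * r ^ (2 + 2*α - 1))))
        / ((1 + r ^ (2 + 2*α)) ^ 2) ^ 2 := (hW r hr).deriv
    have hd2 : deriv (deriv w) r = deriv (fun x : ℝ =>
        (c * (2*x) * (1 + x ^ (2 + 2*α)) ^ 2
        - c * x ^ 2 * ((2:ℕ) * (1 + x ^ (2 + 2*α)) ^ (2-1) * ((2 + 2*α) * x ^ (2 + 2*α - 1))))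
        / ((1 + x ^ (2 + 2*α)) ^ 2) ^ 2) r := by
      apply Filter.EventuallyEq.deriv_eq
      filter_upwards [Ioi_mem_nhds hr] with x hx using (hW x hx).deriv
    -- second derivative
    have ha : HasDerivAt (fun x : ℝ => c * (2*x)) (c * 2) r := by
      simpa using ((hasDerivAt_id r).const_mul (2:ℝ)).const_mul c
    have hb : HasDerivAt (fun y : ℝ => c * y ^ 2) (c * (2*r)) r := by
      simpa [mul_assoc] using (hasDerivAt_pow 2 r).const_mul c
    have hu2 : HasDerivAt (fun x : ℝ => (1 + x ^ (2 + 2*α)) ^ 2)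
        ((2:ℕ) * (1 + r ^ (2 + 2*α)) ^ (2-1) * ((2 + 2*α) * r ^ (2 + 2*α - 1))) r :=
      (hasDerivAt_u α hα hrne).pow 2
    have hc2 : HasDerivAt (fun x : ℝ => (2 + 2*α) * x ^ (2 + 2*α - 1))
        ((2 + 2*α) * ((2 + 2*α - 1) * r ^ (2 + 2*α - 1 - 1))) r :=
      (Real.hasDerivAt_rpow_const (Or.inl hrne)).const_mul (2 + 2*α)
    have hg : HasDerivAt (fun x : ℝ =>
        (2:ℕ) * (1 + x ^ (2 + 2*α)) ^ (2-1) * ((2 + 2*α) * x ^ (2 + 2*α - 1)))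
        (((2:ℕ) * ((1:ℕ) * (1 + r ^ (2 + 2*α)) ^ (1-1) * ((2 + 2*α) * r ^ (2 + 2*α - 1))))
          * ((2 + 2*α) * r ^ (2 + 2*α - 1))
         + (2:ℕ) * (1 + r ^ (2 + 2*α)) ^ (2-1)
           * ((2 + 2*α) * ((2 + 2*α - 1) * r ^ (2 + 2*α - 1 - 1)))) r :=
      ((((hasDerivAt_u α hα hrne).pow 1).const_mul ((2:ℕ):ℝ)).mul hc2)
    have hnum : HasDerivAt (fun x : ℝ =>
        c * (2*x) * (1 + x ^ (2 + 2*α)) ^ 2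
        - c * x ^ 2 * ((2:ℕ) * (1 + x ^ (2 + 2*α)) ^ (2-1) * ((2 + 2*α) * x ^ (2 + 2*α - 1))))
        ((c * 2 * (1 + r ^ (2 + 2*α)) ^ 2
          + c * (2*r) * ((2:ℕ) * (1 + r ^ (2 + 2*α)) ^ (2-1) * ((2 + 2*α) * r ^ (2 + 2*α - 1))))
         - (c * (2*r) * ((2:ℕ) * (1 + r ^ (2 + 2*α)) ^ (2-1) * ((2 + 2*α) * r ^ (2 + 2*α - 1)))
          + c * r ^ 2 *
            (((2:ℕ) * ((1:ℕ) * (1 + r ^ (2 + 2*α)) ^ (1-1) * ((2 + 2*α) * r ^ (2 + 2*α - 1))))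
              * ((2 + 2*α) * r ^ (2 + 2*α - 1))
             + (2:ℕ) * (1 + r ^ (2 + 2*α)) ^ (2-1)
               * ((2 + 2*α) * ((2 + 2*α - 1) * r ^ (2 + 2*α - 1 - 1)))))) r :=
      (ha.mul hu2).sub (hb.mul hg)
    have hden : HasDerivAt (fun x : ℝ => ((1 + x ^ (2 + 2*α)) ^ 2) ^ 2)
        ((2:ℕ) * ((1 + r ^ (2 + 2*α)) ^ 2) ^ (2-1)
          * ((2:ℕ) * (1 + r ^ (2 + 2*α)) ^ (2-1) * ((2 + 2*α) * r ^ (2 + 2*α - 1)))) r :=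
      hu2.pow 2
    have hW'd := (hnum.div hden (by positivity)).deriv
    simp only [Pi.div_def] at hW'd
    rw [hd2, hW'd, hd1]
    simp only [hwdef, gfun]
    rw [split1 α hr, split2 α hr, split3 α hr, hcdef]
    have hA : (0:ℝ) < r ^ (2*α) := Real.rpow_pos_of_pos hr _
    have hDne : (1 + r ^ (2*α) * (r * r)) ≠ 0 := by positivity
    have h4 : (1 + α : ℝ) ≠ 0 := by positivity
    have h5 : (α : ℝ) ≠ 0 := hα.ne'
    push_cast
    field_simp
    ring
  · intro r hr
    have hDpos : (0:ℝ) < 1 + r ^ (2 + 2*α) := by positivity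
    have hD1 : (1:ℝ) ≤ 1 + r ^ (2 + 2*α) := by
      have := Real.rpow_pos_of_pos hr (2 + 2*α); linarith
    have hsq : r ^ 2 ≤ (1 + r ^ (2 + 2*α)) ^ 2 := by
      nlinarith [mySqLe α hr hα]
    have hle : r ^ 2 / (1 + r ^ (2 + 2*α)) ^ 2 ≤ 1 :=
      (div_le_one (by positivity)).mpr hsq
    have h0 : (0:ℝ) ≤ r ^ 2 / (1 + r ^ (2 + 2*α)) ^ 2 := by positivity
    have : |w r| = |c| * (r ^ 2 / (1 + r ^ (2 + 2*α)) ^ 2) := by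
      simp only [hwdef]
      rw [mul_div_assoc, abs_mul, abs_of_nonneg h0]
    rw [this]
    nlinarith [abs_nonneg c]

/-- bounded solutions `w₁`, `w₂` of the frequency-2 forced
linearized equation at the standard bubble with the forcings
`R₁(r) = r^{2+2α}(1+r^{2+2α})^{-2}` and
`R₂(r) = r^{2α}(1+r^{2+2α})^{-2}(4(1+α)²g_α(r)² + g_α(r)r)`. -/
theorem stmt11 (α : ℝ) (hα : 0 < α) (hαN : ∀ n : ℕ, α ≠ (n : ℝ)) :
    (∃ C₁ : ℝ, 0 < C₁ ∧
      ∃ w₁ : ℝ → ℝ, ContDiffOn ℝ 2 w₁ (Set.Ioi 0) ∧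
        (∀ r : ℝ, 0 < r →
          deriv (deriv w₁) r + deriv w₁ r / r
            + (8 * (1 + α) ^ 2 * r ^ (2 * α) / (1 + r ^ (2 + 2 * α)) ^ 2 - 4 / r ^ 2)
              * w₁ r
          = r ^ (2 + 2 * α) / (1 + r ^ (2 + 2 * α)) ^ 2) ∧
        (∀ r : ℝ, 0 < r → |w₁ r| ≤ C₁)) ∧
    (∃ C₂ : ℝ, 0 < C₂ ∧
      ∃ w₂ : ℝ → ℝ, ContDiffOn ℝ 2 w₂ (Set.Ioi 0) ∧
        (∀ r : ℝ, 0 < r →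
          deriv (deriv w₂) r + deriv w₂ r / r
            + (8 * (1 + α) ^ 2 * r ^ (2 * α) / (1 + r ^ (2 + 2 * α)) ^ 2 - 4 / r ^ 2)
              * w₂ r
          = r ^ (2 * α) / (1 + r ^ (2 + 2 * α)) ^ 2
              * (4 * (1 + α) ^ 2 * gfun α r ^ 2 + gfun α r * r)) ∧
        (∀ r : ℝ, 0 < r → |w₂ r| ≤ C₂)) := by
  exact ⟨part1 α hα (by simpa using hαN 1), part2 α hα⟩
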